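/- Single-step primal-gap recursion for Frank–Wolfe with an inexact gradient direction: let x ∈ C, let d ∈ ℝ^d, let γ ∈ [0, 1], let v ∈ C satisfy ⟨d, v⟩ ≤ ⟨d, s⟩ for all s ∈ C, and set x⁺ = (1 − γ)x + γv. Then f(x⁺) − f(x*) ≤ (1 − γ)(f(x) − f(x*)) + γR·‖∇f(x) − d‖ + LR²γ²/2. -/

import Mathlib

open scoped RealInnerProductSpace

variable {F : Type*} [NormedAddCommGroup F] [InnerProductSpace ℝ F] [CompleteSpace F]

-- path derivative
lemma path_hasDerivAt (f : F → ℝ) (hfdiff : Differentiable ℝ f) (a u : F) (t : ℝ) :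
    HasDerivAt (fun s : ℝ => f (a + s • u)) ⟪gradient f (a + t • u), u⟫ t := by
  have hpath : HasDerivAt (fun s : ℝ => a + s • u) u t := by
    simpa using ((hasDerivAt_id t).smul_const u).const_add a
  have hg := (hfdiff (a + t • u)).hasGradientAt
  rw [hasGradientAt_iff_hasFDerivAt] at hg
  have := hg.comp_hasDerivAt t hpath
  simpa [Function.comp_def] using this

lemma grad_continuous (f : F → ℝ) {L : ℝ} (h : 0 < L)
    (hflip : ∀ u w, ‖gradient f u - gradient f w‖ ≤ L * ‖u - w‖) :
    Continuous (gradient f) := (LipschitzWith.of_dist_le_mul (fun u w => by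
      simpa [dist_eq_norm] using (hflip u w).trans (le_of_eq (by
        rw [Real.coe_toNNReal _ h.le])))).continuous

lemma descent_lemma (f : F → ℝ) (hfdiff : Differentiable ℝ f) {L : ℝ} (hLpos : 0 < L)
    (hflip : ∀ u w, ‖gradient f u - gradient f w‖ ≤ L * ‖u - w‖)
    (a u : F) :
    f (a + u) ≤ f a + ⟪gradient f a, u⟫ + L / 2 * ‖u‖ ^ 2 := by
  have hL0 : 0 ≤ L := hLpos.le
  have hcont : Continuous fun t : ℝ => ⟪gradient f (a + t • u), u⟫ := by
    apply Continuous.inner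
    · exact (grad_continuous f hLpos hflip).comp (by continuity)
    · exact continuous_const
  have hderiv : ∀ t ∈ Set.uIcc (0:ℝ) 1,
      HasDerivAt (fun s : ℝ => f (a + s • u)) ⟪gradient f (a + t • u), u⟫ t :=
    fun t _ => path_hasDerivAt f hfdiff a u t
  have hint : IntervalIntegrable (fun t : ℝ => ⟪gradient f (a + t • u), u⟫)
      MeasureTheory.volume 0 1 := hcont.intervalIntegrable 0 1
  have heq : f (a + u) - f a = ∫ t in (0:ℝ)..1, ⟪gradient f (a + t • u), u⟫ := by
    have := intervalIntegral.integral_eq_sub_of_hasDerivAt hderiv hint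
    simp at this
    rw [← this]; simp
  have hbound : ∀ t ∈ Set.Icc (0:ℝ) 1,
      ⟪gradient f (a + t • u), u⟫ ≤ ⟪gradient f a, u⟫ + L * t * ‖u‖ ^ 2 := by
    intro t ht
    have h1 : ⟪gradient f (a + t • u) - gradient f a, u⟫ ≤
        ‖gradient f (a + t • u) - gradient f a‖ * ‖u‖ := real_inner_le_norm _ _
    have h2 : ‖gradient f (a + t • u) - gradient f a‖ ≤ L * (t * ‖u‖) := by
      have := hflip (a + t • u) a
      simpa [norm_smul, abs_of_nonneg ht.1] using this
    have h3 : ⟪gradient f (a + t • u) - gradient f a, u⟫ ≤ L * t * ‖u‖ ^ 2 := by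
      nlinarith [norm_nonneg u, norm_nonneg (gradient f (a + t • u) - gradient f a), mul_nonneg ht.1 (norm_nonneg u)]
    have := inner_sub_left (𝕜 := ℝ) (gradient f (a + t • u)) (gradient f a) u
    linarith [h3, this.symm.le, this.le]
  have hmono : (∫ t in (0:ℝ)..1, ⟪gradient f (a + t • u), u⟫) ≤
      ∫ t in (0:ℝ)..1, (⟪gradient f a, u⟫ + L * t * ‖u‖ ^ 2) := by
    apply intervalIntegral.integral_mono_on zero_le_one hint
    · exact (Continuous.intervalIntegrable (by continuity) 0 1)
    · exact hbound
  have hval : (∫ t in (0:ℝ)..1, (⟪gradient f a, u⟫ + L * t * ‖u‖ ^ 2)) =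
      ⟪gradient f a, u⟫ + L / 2 * ‖u‖ ^ 2 := by
    rw [intervalIntegral.integral_add (by apply Continuous.intervalIntegrable; continuity)
      (by apply Continuous.intervalIntegrable; continuity)]
    rw [show (fun t : ℝ => L * t * ‖u‖ ^ 2) = (fun t : ℝ => (L * ‖u‖ ^ 2) * t) from by ext t; ring]
    rw [intervalIntegral.integral_const_mul, integral_id]
    simp
    ring
  linarith [heq, hmono, hval.le, hval.ge]

lemma convex_grad_ineq (f : F → ℝ) (hfconv : ConvexOn ℝ Set.univ f)
    (hfdiff : Differentiable ℝ f) (a b : F) :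
    f a + ⟪gradient f a, b - a⟫ ≤ f b := by
  have hder : HasDerivAt (fun s : ℝ => f (a + s • (b - a))) ⟪gradient f a, b - a⟫ 0 := by
    simpa using path_hasDerivAt f hfdiff a (b - a) 0
  have hslope : Filter.Tendsto (fun t : ℝ => (f (a + t • (b - a)) - f a) / t)
      (nhdsWithin 0 (Set.Ioi 0)) (nhds ⟪gradient f a, b - a⟫) := by
    have := hder.hasDerivWithinAt (s := Set.Ioi (0:ℝ))
    have h2 := (hasDerivWithinAt_iff_tendsto_slope).mp this
    refine h2.comp (Filter.tendsto_inf.mpr ⟨Filter.tendsto_id.mono_left nhdsWithin_le_nhds, ?_⟩) |>.congr ?_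
    · rw [Filter.tendsto_principal]
      filter_upwards [self_mem_nhdsWithin] with t ht
      simp only [Set.mem_diff, Set.mem_singleton_iff]
      exact ⟨ht, ne_of_gt ht⟩
    · intro t
      simp [slope, Function.comp]
      ring
  have hev : ∀ᶠ t in nhdsWithin 0 (Set.Ioi 0),
      (f (a + t • (b - a)) - f a) / t ≤ f b - f a := by
    filter_upwards [Ioc_mem_nhdsGT_of_mem (Set.mem_Ico.mpr ⟨le_refl (0:ℝ), zero_lt_one⟩)] with t ht
    have hconv := hfconv.2 (Set.mem_univ a) (Set.mem_univ b)
      (by linarith [ht.1, ht.2] : (0:ℝ) ≤ 1 - t) ht.1.le (by ring)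
    have hpt : (1 - t) • a + t • b = a + t • (b - a) := by
      rw [smul_sub]; module
    rw [hpt] at hconv
    simp only [smul_eq_mul] at hconv
    rw [div_le_iff₀ ht.1]
    nlinarith [hconv]
  have := le_of_tendsto hslope hev
  linarith

theorem frank_wolfe_single_step_primal_gap
    (d : ℕ) (hd : 1 ≤ d)
    (C : Set (EuclideanSpace ℝ (Fin d)))
    (hCne : C.Nonempty) (hCcomp : IsCompact C) (hCconv : Convex ℝ C)
    (R : ℝ) (hR : 0 < R) (hdiam : ∀ u ∈ C, ∀ w ∈ C, ‖u - w‖ ≤ R)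
    (f : EuclideanSpace ℝ (Fin d) → ℝ)
    (hfconv : ConvexOn ℝ Set.univ f)
    (hfdiff : Differentiable ℝ f)
    (L : ℝ) (hL : 0 < L)
    (hflip : ∀ u w, ‖gradient f u - gradient f w‖ ≤ L * ‖u - w‖)
    (xstar : EuclideanSpace ℝ (Fin d)) (hxstarC : xstar ∈ C)
    (hxstar : ∀ u ∈ C, f xstar ≤ f u)
    (x : EuclideanSpace ℝ (Fin d)) (hx : x ∈ C)
    (dvec : EuclideanSpace ℝ (Fin d))
    (γ : ℝ) (hγ0 : 0 ≤ γ) (hγ1 : γ ≤ 1)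
    (v : EuclideanSpace ℝ (Fin d)) (hvC : v ∈ C)
    (hvmin : ∀ s ∈ C, ⟪dvec, v⟫ ≤ ⟪dvec, s⟫) :
    f ((1 - γ) • x + γ • v) - f xstar ≤
      (1 - γ) * (f x - f xstar) + γ * R * ‖gradient f x - dvec‖ +
        L * R ^ 2 * γ ^ 2 / 2 := by
  set g := gradient f x with hg
  have hxp : (1 - γ) • x + γ • v = x + γ • (v - x) := by
    rw [smul_sub]; module
  -- descent lemma
  have hdesc : f (x + γ • (v - x)) ≤ f x + ⟪g, γ • (v - x)⟫ + L / 2 * ‖γ • (v - x)‖ ^ 2 :=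
    descent_lemma f hfdiff hL hflip x (γ • (v - x))
  have hnorm : ‖γ • (v - x)‖ ^ 2 ≤ γ ^ 2 * R ^ 2 := by
    rw [norm_smul]
    have := hdiam v hvC x hx
    have h0 : 0 ≤ ‖v - x‖ := norm_nonneg _
    rw [Real.norm_eq_abs, abs_of_nonneg hγ0]
    calc (γ * ‖v - x‖) ^ 2 = γ ^ 2 * ‖v - x‖ ^ 2 := by ring
      _ ≤ γ ^ 2 * R ^ 2 := mul_le_mul_of_nonneg_left (by nlinarith) (sq_nonneg γ)
  -- inner product decomposition
  have hinner : ⟪g, v - x⟫ = ⟪dvec, v - x⟫ + ⟪g - dvec, v - x⟫ := by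
    rw [inner_sub_left]; ring
  have hv : ⟪dvec, v - x⟫ ≤ ⟪dvec, xstar - x⟫ := by
    rw [inner_sub_right, inner_sub_right]
    linarith [hvmin xstar hxstarC]
  have hsplit : ⟪dvec, xstar - x⟫ = ⟪g, xstar - x⟫ - ⟪g - dvec, xstar - x⟫ := by
    rw [inner_sub_left]; ring
  have hconvineq : ⟪g, xstar - x⟫ ≤ f xstar - f x := by
    have := convex_grad_ineq f hfconv hfdiff x xstar
    linarith
  have hcs : ⟪g - dvec, v - x⟫ - ⟪g - dvec, xstar - x⟫ ≤ ‖g - dvec‖ * R := by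
    have heq : ⟪g - dvec, v - x⟫ - ⟪g - dvec, xstar - x⟫ = ⟪g - dvec, v - xstar⟫ := by
      rw [← inner_sub_right]
      congr 1
      abel
    rw [heq]
    calc ⟪g - dvec, v - xstar⟫ ≤ ‖g - dvec‖ * ‖v - xstar‖ := real_inner_le_norm _ _
      _ ≤ ‖g - dvec‖ * R := by
          apply mul_le_mul_of_nonneg_left (hdiam v hvC xstar hxstarC) (norm_nonneg _)
  have hkey : ⟪g, v - x⟫ ≤ f xstar - f x + ‖g - dvec‖ * R := by
    have := hinner
    linarith [hv, hsplit.le, hsplit.ge, hconvineq, hcs]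
  have hsmul : ⟪g, γ • (v - x)⟫ = γ * ⟪g, v - x⟫ := real_inner_smul_right g _ γ
  rw [hxp]
  have hγR : γ * ⟪g, v - x⟫ ≤ γ * (f xstar - f x + ‖g - dvec‖ * R) :=
    mul_le_mul_of_nonneg_left hkey hγ0
  have hfin : L / 2 * ‖γ • (v - x)‖ ^ 2 ≤ L * R ^ 2 * γ ^ 2 / 2 := by
    nlinarith
  nlinarith [hdesc, hsmul.le, hsmul.ge]
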